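/- Let N be a Poisson process with rate λ > 0 and (C_i) an i.i.d. sequence of real random variables independent of N, and let M be a Poisson process with rate rλ (r > 0) independent of N and (C_i). Then for any T > 0 the laws of the compound Poisson paths (Σ_{i=1}^{N_t} C_i)_{0≤t≤T} and (Σ_{i=1}^{M_t} C_i)_{0≤t≤T} on Skorokhod space are mutually absolutely continuous. -/

import Mathlib

open MeasureTheory ProbabilityTheory Filter Topology Set
open scoped NNReal ENNReal

section Prelim
variable {Ω : Type*} [MeasurableSpace Ω]

/-- Independent increments for a real-time process. -/
def HasIndepIncrements {E : Type*} [MeasurableSpace E] [Sub E]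
    (μ : Measure Ω) (X : ℝ → Ω → E) : Prop :=
  ∀ (n : ℕ) (t : Fin (n + 1) → ℝ), Monotone t →
    iIndepFun
      (fun i : Fin n => fun ω => X (t i.succ) ω - X (t i.castSucc) ω) μ

/-- Stationary increments. -/
def HasStatIncrements {E : Type*} [MeasurableSpace E] [Sub E]
    (μ : Measure Ω) (X : ℝ → Ω → E) : Prop :=
  ∀ s t : ℝ, 0 ≤ s → 0 ≤ t →
    Measure.map (fun ω => X (s + t) ω - X s ω) μ = Measure.map (X t) μ

/-- A càdlàg path on `[0,∞)`. -/
def CadlagOn {E : Type*} [TopologicalSpace E] (f : ℝ → E) : Prop :=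
  (∀ t ≥ (0:ℝ), ContinuousWithinAt f (Set.Ici t) t) ∧
    ∀ t > (0:ℝ), ∃ l, Tendsto f (nhdsWithin t (Set.Iio t)) (nhds l)

/-- A Lévy process with values in `E`. -/
def IsLevyProcess {E : Type*} [MeasurableSpace E] [TopologicalSpace E] [SubtractionMonoid E]
    (μ : Measure Ω) (X : ℝ → Ω → E) : Prop :=
  IsProbabilityMeasure μ ∧ (∀ ω, X 0 ω = 0) ∧ (∀ t, Measurable (X t)) ∧
    HasIndepIncrements μ X ∧ HasStatIncrements μ X ∧
    ∀ᵐ ω ∂μ, CadlagOn fun t => X t ω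

/-- A subordinator: a real Lévy process with nondecreasing paths. -/
def IsSubordinator (μ : Measure Ω) (X : ℝ → Ω → ℝ) : Prop :=
  IsLevyProcess μ X ∧ ∀ᵐ ω ∂μ, MonotoneOn (fun t => X t ω) (Set.Ici (0:ℝ))

/-- Left-endpoint Riemann sum of `H` against `X` along the partition `t`. -/
def riemannSum {n : ℕ} (t : Fin (n + 1) → ℝ) (H X : ℝ → Ω → ℝ) (ω : Ω) : ℝ :=
  ∑ i : Fin n, H (t i.castSucc) ω * (X (t i.succ) ω - X (t i.castSucc) ω)

/-- `Z = ∫_0^T H_{s-} dX_s` in the semimartingale sense: the left-endpoint Riemann sums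
converge to `Z` in probability as the mesh of the partition of `[0,T]` tends to `0`. -/
def IsStochInt (μ : Measure Ω) (H X : ℝ → Ω → ℝ) (T : ℝ) (Z : Ω → ℝ) : Prop :=
  ∀ ε > (0:ℝ), ∀ δ > (0:ℝ), ∃ m > (0:ℝ), ∀ (n : ℕ) (t : Fin (n + 1) → ℝ),
    Monotone t → t 0 = 0 → t (Fin.last n) = T →
    (∀ i : Fin n, t i.succ - t i.castSucc < m) →
    μ {ω | δ ≤ |riemannSum t H X ω - Z ω|} < ENNReal.ofReal ε

/-- `Q = [X,X]_T`: sums of squared increments converge to `Q` in probability. -/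
def IsQuadVar (μ : Measure Ω) (X : ℝ → Ω → ℝ) (T : ℝ) (Q : Ω → ℝ) : Prop :=
  ∀ ε > (0:ℝ), ∀ δ > (0:ℝ), ∃ m > (0:ℝ), ∀ (n : ℕ) (t : Fin (n + 1) → ℝ),
    Monotone t → t 0 = 0 → t (Fin.last n) = T →
    (∀ i : Fin n, t i.succ - t i.castSucc < m) →
    μ {ω | δ ≤ |(∑ i : Fin n, (X (t i.succ) ω - X (t i.castSucc) ω) ^ 2) - Q ω|} < ENNReal.ofReal ε

/-- The jump of a path at time `t`. -/
noncomputable def jump (f : ℝ → ℝ) (t : ℝ) : ℝ := f t - Function.leftLim f t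

/-- `(γ, σ², Π)` is the characteristic (Lévy–Khintchine) triplet of the real Lévy
process `X`, expressed through its characteristic function. -/
def IsLevyTriplet (μ : Measure Ω) (X : ℝ → Ω → ℝ) (γ σ2 : ℝ) (ν : Measure ℝ) : Prop :=
  ∀ (u t : ℝ), 0 ≤ t →
    ∫ ω, Complex.exp (Complex.I * u * X t ω) ∂μ =
      Complex.exp (t * (Complex.I * γ * u - σ2 * u ^ 2 / 2 +
        ∫ x, (Complex.exp (Complex.I * u * x) - 1 -
          Complex.I * u * x * Set.indicator {y : ℝ | |y| < 1} (fun _ => (1:ℂ)) x) ∂ν))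

/-- A Poisson process with rate `r`. -/
def IsPoissonProcess (μ : Measure Ω) (r : ℝ≥0) (N : ℝ → Ω → ℕ) : Prop :=
  IsProbabilityMeasure μ ∧ (∀ ω, N 0 ω = 0) ∧ (∀ t, Measurable (N t)) ∧
    (∀ᵐ ω ∂μ, MonotoneOn (fun t => N t ω) (Set.Ici (0:ℝ))) ∧
    (∀ (n : ℕ) (t : Fin (n + 1) → ℝ), Monotone t →
      iIndepFun
        (fun i : Fin n => fun ω => N (t i.succ) ω - N (t i.castSucc) ω) μ) ∧
    ∀ s t : ℝ, 0 ≤ s → s ≤ t →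
      Measure.map (fun ω => N t ω - N s ω) μ = poissonMeasure (r * Real.toNNReal (t - s))

/-- A standard Brownian motion. -/
def IsBrownianMotion (μ : Measure Ω) (B : ℝ → Ω → ℝ) : Prop :=
  IsProbabilityMeasure μ ∧ (∀ ω, B 0 ω = 0) ∧ (∀ t, Measurable (B t)) ∧
    HasIndepIncrements μ B ∧
    (∀ s t : ℝ, 0 ≤ s → s ≤ t →
      Measure.map (fun ω => B t ω - B s ω) μ = gaussianReal 0 (Real.toNNReal (t - s))) ∧
    ∀ᵐ ω ∂μ, Continuous fun t => B t ω

end Prelim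


lemma my_poisson_singleton (b : ℝ≥0) (d : ℕ) :
    poissonMeasure b {d} = ENNReal.ofReal (poissonPMFReal b d) := by
  rw [poissonMeasure_singleton]
  rfl

lemma my_poisson_ratio (r b : ℝ≥0) (d : ℕ) :
    poissonMeasure (r * b) {d}
      = ENNReal.ofReal ((r:ℝ) ^ d * Real.exp (-(((r:ℝ) - 1) * b))) * poissonMeasure b {d} := by
  rw [my_poisson_singleton, my_poisson_singleton, ← ENNReal.ofReal_mul (by positivity)]
  congr 1
  unfold poissonPMFReal
  have h1 : Real.exp (-((r:ℝ) * b)) = Real.exp (-(((r:ℝ) - 1) * b)) * Real.exp (-(b:ℝ)) := by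
    rw [← Real.exp_add]; ring_nf
  push_cast
  rw [h1, mul_pow]
  ring

lemma my_nat_telescope (m : ℕ) (f : ℕ → ℕ) (h : ∀ i < m, f i ≤ f (i + 1)) :
    ∑ i ∈ Finset.range m, (f (i + 1) - f i) = f m - f 0 := by
  induction m with
  | zero => simp
  | succ n ih =>
      have h0n : f 0 ≤ f n := by
        clear ih
        induction n with
        | zero => exact le_refl _
        | succ p ihp =>
            exact le_trans (ihp (fun i hi => h i (by omega))) (h p (by omega))
      rw [Finset.sum_range_succ, ih (fun i hi => h i (by omega))]
      have := h n (by omega)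
      omega

section Joint
variable {Ω : Type*} [MeasurableSpace Ω]

lemma my_poisson_joint (μ : Measure Ω) (a : ℝ≥0)
    (X : ℝ → Ω → ℕ) (hX : IsPoissonProcess μ a X)
    (m : ℕ) (t : Fin (m + 1) → ℝ) (hmono : Monotone t) (ht0 : t 0 = 0)
    (k : Fin (m + 1) → ℕ) :
    μ {ω | ∀ j, X (t j) ω = k j}
      = if (k 0 = 0 ∧ ∀ i : Fin m, k i.castSucc ≤ k i.succ)
        then ∏ i : Fin m, poissonMeasure (a * Real.toNNReal (t i.succ - t i.castSucc))
          {k i.succ - k i.castSucc}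
        else 0 := by
  obtain ⟨hprob, hzero, hmeas, hmonoae, hinc, hmarg⟩ := hX
  have htnn : ∀ j, 0 ≤ t j := fun j => ht0 ▸ hmono (Fin.zero_le j)
  by_cases h : k 0 = 0 ∧ ∀ i : Fin m, k i.castSucc ≤ k i.succ
  · rw [if_pos h]
    obtain ⟨hk0, hkmono⟩ := h
    -- identify the event with the increments event, a.e.
    have hae : {ω | ∀ j, X (t j) ω = k j}
        =ᵐ[μ] ⋂ i : Fin m, (fun ω => X (t i.succ) ω - X (t i.castSucc) ω) ⁻¹'
          {k i.succ - k i.castSucc} := by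
      rw [Filter.eventuallyEq_set]
      filter_upwards [hmonoae] with ω hω
      simp only [Set.mem_setOf_eq, Set.mem_iInter, Set.mem_preimage,
        Set.mem_singleton_iff]
      constructor
      · intro hj i
        rw [hj i.succ, hj i.castSucc]
      · intro hi j
        induction j using Fin.induction with
        | zero => rw [ht0, hzero ω, hk0]
        | succ i ih =>
            have hle : X (t i.castSucc) ω ≤ X (t i.succ) ω :=
              hω (htnn _) (htnn _) (hmono (Fin.castSucc_le_succ i))
            have h1 : X (t i.succ) ω = X (t i.succ) ω - X (t i.castSucc) ω
                + X (t i.castSucc) ω := (Nat.sub_add_cancel hle).symm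
            rw [h1, hi i, ih, Nat.sub_add_cancel (hkmono i)]
    rw [measure_congr hae]
    rw [(hinc m t hmono).meas_iInter
      (fun i => ⟨{k i.succ - k i.castSucc}, measurableSet_singleton _, rfl⟩)]
    refine Finset.prod_congr rfl fun i _ => ?_
    rw [← hmarg (t i.castSucc) (t i.succ) (htnn _) (hmono (Fin.castSucc_le_succ i)),
      Measure.map_apply (f := fun ω => X (t i.succ) ω - X (t i.castSucc) ω)
        ((hmeas _).sub (hmeas _)) (measurableSet_singleton _)]
  · rw [if_neg h]
    rw [measure_eq_zero_iff_ae_notMem]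
    filter_upwards [hmonoae] with ω hω hE
    rcases Decidable.not_and_iff_or_not.mp h with h0 | hmo
    · exact h0 (by rw [← hE 0, ht0, hzero ω])
    · push_neg at hmo
      obtain ⟨i, hi⟩ := hmo
      have hle : X (t i.castSucc) ω ≤ X (t i.succ) ω :=
        hω (htnn _) (htnn _) (hmono (Fin.castSucc_le_succ i))
      rw [hE i.castSucc, hE i.succ] at hle
      omega

end Joint

section Ratio
variable {Ω : Type*} [MeasurableSpace Ω]

lemma my_pmf_ratio (μ : Measure Ω) (lam r : ℝ≥0)
    (N M : ℝ → Ω → ℕ) (hN : IsPoissonProcess μ lam N) (hM : IsPoissonProcess μ (r * lam) M)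
    (T : ℝ) (m : ℕ) (t : Fin (m + 1) → ℝ) (hmono : Monotone t) (ht0 : t 0 = 0)
    (htl : t (Fin.last m) = T) (k : Fin (m + 1) → ℕ) :
    μ {ω | ∀ j, M (t j) ω = k j}
      = ENNReal.ofReal ((r:ℝ) ^ (k (Fin.last m) - k 0)
          * Real.exp (-(((r:ℝ) - 1) * lam * T)))
        * μ {ω | ∀ j, N (t j) ω = k j} := by
  rw [my_poisson_joint μ (r * lam) M hM m t hmono ht0 k,
    my_poisson_joint μ lam N hN m t hmono ht0 k]
  split_ifs with h
  · obtain ⟨hk0, hkm⟩ := h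
    -- auxiliary ℕ-indexed versions for telescoping
    set t' : ℕ → ℝ := fun j => t ⟨min j m, by omega⟩ with ht'
    set k' : ℕ → ℕ := fun j => k ⟨min j m, by omega⟩ with hk'
    have hsucc : ∀ i : Fin m, (i.succ : Fin (m + 1)) = ⟨min (↑i + 1) m, by omega⟩ := by
      intro i
      exact Fin.ext (by simp [Nat.min_eq_left (by omega : (i:ℕ) + 1 ≤ m)])
    have hcast : ∀ i : Fin m, (i.castSucc : Fin (m + 1)) = ⟨min (↑i : ℕ) m, by omega⟩ := by
      intro i
      exact Fin.ext (by simp [Nat.min_eq_left (le_of_lt i.2)])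
    have hlastt : (Fin.last m : Fin (m+1)) = ⟨min m m, by omega⟩ := Fin.ext (by simp)
    have hts : ∑ i : Fin m, (t i.succ - t i.castSucc) = T := by
      have : ∀ i : Fin m, t i.succ - t i.castSucc = t' ((i : ℕ) + 1) - t' (i : ℕ) := by
        intro i; rw [ht', hsucc i, hcast i]
      rw [Finset.sum_congr rfl (fun i _ => this i),
        Fin.sum_univ_eq_sum_range (fun j => t' (j + 1) - t' j) m,
        Finset.sum_range_sub t' m]
      have h1 : t' m = T := by rw [ht', ← htl, hlastt]
      have h2 : t' 0 = 0 := by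
        rw [ht']; convert ht0 using 2; exact Fin.ext (by simp)
      rw [h1, h2, sub_zero]
    have hks : ∑ i : Fin m, (k i.succ - k i.castSucc) = k (Fin.last m) - k 0 := by
      have : ∀ i : Fin m, k i.succ - k i.castSucc = k' ((i : ℕ) + 1) - k' (i : ℕ) := by
        intro i; rw [hk', hsucc i, hcast i]
      rw [Finset.sum_congr rfl (fun i _ => this i),
        Fin.sum_univ_eq_sum_range (fun j => k' (j + 1) - k' j) m,
        my_nat_telescope m k' (fun i hi => by
          have := hkm ⟨i, hi⟩
          rwa [hsucc ⟨i, hi⟩, hcast ⟨i, hi⟩] at this)]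
      have h1 : k' m = k (Fin.last m) := by rw [hk', hlastt]
      have h2 : k' 0 = k 0 := by
        show k ⟨min 0 m, by omega⟩ = k 0
        exact congrArg k (Fin.ext (by simp))
      rw [h1, h2]
    have hfac : ∀ i : Fin m,
        poissonMeasure (r * lam * Real.toNNReal (t i.succ - t i.castSucc))
          {k i.succ - k i.castSucc}
        = ENNReal.ofReal ((r:ℝ) ^ (k i.succ - k i.castSucc)
            * Real.exp (-(((r:ℝ) - 1) * ((lam * Real.toNNReal (t i.succ - t i.castSucc) : ℝ≥0) : ℝ))))
          * poissonMeasure (lam * Real.toNNReal (t i.succ - t i.castSucc))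
            {k i.succ - k i.castSucc} := by
      intro i
      rw [mul_assoc]
      exact my_poisson_ratio r (lam * Real.toNNReal (t i.succ - t i.castSucc)) _
    rw [Finset.prod_congr rfl (fun i _ => hfac i), Finset.prod_mul_distrib]
    congr 1
    rw [← ENNReal.ofReal_prod_of_nonneg (fun i _ => by positivity)]
    congr 1
    rw [Finset.prod_mul_distrib, Finset.prod_pow_eq_pow_sum, hks, ← Real.exp_sum]
    congr 2
    have hb : ∀ i : Fin m,
        ((lam * Real.toNNReal (t i.succ - t i.castSucc) : ℝ≥0) : ℝ)
          = (lam : ℝ) * (t i.succ - t i.castSucc) := by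
      intro i
      rw [NNReal.coe_mul, Real.coe_toNNReal _ (sub_nonneg.2 (hmono (Fin.castSucc_le_succ i)))]
    calc ∑ i : Fin m, -(((r:ℝ) - 1) * ((lam * Real.toNNReal (t i.succ - t i.castSucc) : ℝ≥0) : ℝ))
        = ∑ i : Fin m, (-(((r:ℝ) - 1) * (lam : ℝ))) * (t i.succ - t i.castSucc) := by
          refine Finset.sum_congr rfl fun i _ => ?_
          rw [hb i]; ring
      _ = (-(((r:ℝ) - 1) * (lam : ℝ))) * ∑ i : Fin m, (t i.succ - t i.castSucc) := by
          rw [Finset.mul_sum]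
      _ = -(((r:ℝ) - 1) * lam * T) := by rw [hts]; ring
  · simp

end Ratio

section Core
variable {Ω : Type*} [MeasurableSpace Ω]

lemma my_compound_core (μ : Measure Ω) [IsProbabilityMeasure μ]
    (lam r : ℝ≥0) (N M : ℝ → Ω → ℕ)
    (hN : IsPoissonProcess μ lam N) (hM : IsPoissonProcess μ (r * lam) M)
    (T : ℝ) (hT : 0 < T) :
    μ.map (fun ω => fun t : Set.Icc (0:ℝ) T => M (t:ℝ) ω)
      = (μ.map (fun ω => fun t : Set.Icc (0:ℝ) T => N (t:ℝ) ω)).withDensity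
          (fun f => ENNReal.ofReal
            ((r:ℝ) ^ (f ⟨T, Set.right_mem_Icc.2 hT.le⟩)
              * Real.exp (-(((r:ℝ) - 1) * lam * T)))) := by
  set τ : Set.Icc (0:ℝ) T := ⟨T, Set.right_mem_Icc.2 hT.le⟩ with hτ
  have hmeasN : Measurable (fun ω => fun t : Set.Icc (0:ℝ) T => N (t:ℝ) ω) :=
    measurable_pi_lambda _ fun t => hN.2.2.1 _
  have hmeasM : Measurable (fun ω => fun t : Set.Icc (0:ℝ) T => M (t:ℝ) ω) :=
    measurable_pi_lambda _ fun t => hM.2.2.1 _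
  haveI : IsProbabilityMeasure (μ.map (fun ω => fun t : Set.Icc (0:ℝ) T => M (t:ℝ) ω)) :=
    Measure.isProbabilityMeasure_map hmeasM.aemeasurable
  have key : ∀ A ∈ measurableCylinders (fun _ : Set.Icc (0:ℝ) T => ℕ),
      (μ.map (fun ω => fun t : Set.Icc (0:ℝ) T => M (t:ℝ) ω)) A
        = ((μ.map (fun ω => fun t : Set.Icc (0:ℝ) T => N (t:ℝ) ω)).withDensity
            (fun f => ENNReal.ofReal
              ((r:ℝ) ^ (f τ) * Real.exp (-(((r:ℝ) - 1) * lam * T))))) A := by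
    intro A hA
    obtain ⟨s, S, hS, rfl⟩ := (mem_measurableCylinders A).1 hA
    classical
    set s' : Finset (Set.Icc (0:ℝ) T) := insert τ s with hs'
    have hτs' : τ ∈ s' := Finset.mem_insert_self _ _
    set R : (∀ _ : Set.Icc (0:ℝ) T, ℕ) → ({x // x ∈ s'} → ℕ) := fun f i => f i with hR
    have hres : Measurable R := measurable_pi_lambda _ fun i => measurable_pi_apply _
    set proj : ((i : {x // x ∈ s'}) → ℕ) → ((i : {x // x ∈ s}) → ℕ) :=
      fun k i => k ⟨i.1, Finset.mem_insert_of_mem i.2⟩ with hproj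
    have hcyl : cylinder s S = R ⁻¹' (proj ⁻¹' S) := rfl
    rw [hcyl]
    -- decompose into atoms
    have hdecomp : ∀ (κ : Measure (∀ _ : Set.Icc (0:ℝ) T, ℕ)) (B : Set ({x // x ∈ s'} → ℕ)),
        κ (R ⁻¹' B) = ∑' k : B, κ (R ⁻¹' {(k : {x // x ∈ s'} → ℕ)}) := by
      intro κ B
      have hUnion : R ⁻¹' B = ⋃ k : B, R ⁻¹' {(k : {x // x ∈ s'} → ℕ)} := by
        ext f
        simp only [Set.mem_preimage, Set.mem_iUnion, Set.mem_singleton_iff]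
        exact ⟨fun h => ⟨⟨_, h⟩, rfl⟩, fun ⟨k, hk⟩ => hk ▸ k.2⟩
      rw [hUnion, measure_iUnion ?_ (fun k => hres (measurableSet_singleton _))]
      intro k k' hkk'
      simp only [Function.onFun]
      exact Disjoint.preimage _ (disjoint_singleton.2 (Subtype.coe_injective.ne hkk'))
    rw [hdecomp, hdecomp]
    refine tsum_congr fun ⟨k, hk⟩ => ?_
    -- atom identity
    -- RHS computation
    rw [withDensity_apply _ (hres (measurableSet_singleton _))]
    rw [setLIntegral_congr_fun (μ := (μ.map (fun ω => fun t : Set.Icc (0:ℝ) T => N (t:ℝ) ω)))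
      (hres (measurableSet_singleton _))
      ((fun f hf => ?_ :
        ∀ f ∈ R ⁻¹' {k}, ENNReal.ofReal
          ((r:ℝ) ^ (f τ) * Real.exp (-(((r:ℝ) - 1) * lam * T)))
        = ENNReal.ofReal
          ((r:ℝ) ^ (k ⟨τ, hτs'⟩) * Real.exp (-(((r:ℝ) - 1) * lam * T)))))]
    rotate_left
    · have : f τ = k ⟨τ, hτs'⟩ := by
        have := congrFun (Set.mem_singleton_iff.1 hf) ⟨τ, hτs'⟩
        exact this
      rw [this]
    rw [setLIntegral_const]
    -- sorted times
    obtain ⟨m, hm⟩ : ∃ m, s'.card = m + 1 :=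
      ⟨s'.card - 1, by have : 0 < s'.card := Finset.card_pos.2 ⟨τ, hτs'⟩; omega⟩
    set e := s'.orderIsoOfFin hm with he
    set tt : Fin (m + 2) → ℝ := Fin.cons 0 (fun i => ((e i : Set.Icc (0:ℝ) T) : ℝ)) with htt
    set kk : Fin (m + 2) → ℕ := Fin.cons 0 (fun i => k (e i)) with hkk
    have hmono : Monotone tt := by
      rw [Fin.monotone_iff_le_succ]
      intro i
      induction i using Fin.cases with
      | zero =>
          rw [htt]
          simp only [Fin.castSucc_zero, Fin.cons_zero, Fin.cons_succ]
          exact ((e 0 : Set.Icc (0:ℝ) T)).2.1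
      | succ j =>
          rw [htt]
          have h1 : (j.succ).castSucc = (j.castSucc).succ := (Fin.succ_castSucc j).symm
          rw [h1]
          simp only [Fin.cons_succ]
          exact Subtype.coe_le_coe.2 (Subtype.coe_le_coe.2 (e.monotone (Fin.castSucc_le_succ j)))
    have htt0 : tt 0 = 0 := by rw [htt]; simp
    have hetop : e (Fin.last m) = ⟨τ, hτs'⟩ := by
      refine le_antisymm ?_ ?_
      · exact Subtype.coe_le_coe.1 (Subtype.coe_le_coe.1 ((e (Fin.last m) : Set.Icc (0:ℝ) T)).2.2)
      · have : e (e.symm ⟨τ, hτs'⟩) = ⟨τ, hτs'⟩ := e.apply_symm_apply _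
        rw [← this]
        exact e.monotone (Fin.le_last _)
    have httl : tt (Fin.last (m + 1)) = T := by
      rw [htt, ← Fin.succ_last, Fin.cons_succ, hetop]
    have hkkl : kk (Fin.last (m + 1)) = k ⟨τ, hτs'⟩ := by
      rw [hkk, ← Fin.succ_last, Fin.cons_succ, hetop]
    -- event identification
    have hevent : ∀ (X : ℝ → Ω → ℕ), (∀ ω, X 0 ω = 0) →
        (fun ω => fun t : Set.Icc (0:ℝ) T => X (t:ℝ) ω) ⁻¹' (R ⁻¹' {k})
          = {ω | ∀ j, X (tt j) ω = kk j} := by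
      intro X hX0
      ext ω
      simp only [Set.mem_preimage, Set.mem_singleton_iff, Set.mem_setOf_eq, funext_iff]
      constructor
      · intro h j
        induction j using Fin.cases with
        | zero => rw [htt, hkk]; simp [hX0 ω]
        | succ i =>
            rw [htt, hkk]
            simp only [Fin.cons_succ]
            exact h ⟨(e i : Set.Icc (0:ℝ) T), (e i).2⟩
      · intro h i
        have := h ((e.symm ⟨(i : Set.Icc (0:ℝ) T), i.2⟩).succ)
        rw [htt, hkk] at this
        simp only [Fin.cons_succ, e.apply_symm_apply] at this
        exact this
    rw [Measure.map_apply hmeasM (hres (measurableSet_singleton _)),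
      Measure.map_apply hmeasN (hres (measurableSet_singleton _)),
      hevent M hM.2.1, hevent N hN.2.1,
      my_pmf_ratio μ lam r N M hN hM T (m + 1) tt hmono htt0 httl kk]
    rw [hkkl]
    have hkk0 : kk 0 = 0 := by rw [hkk]; simp
    rw [hkk0, Nat.sub_zero]
  refine ext_of_generate_finite _ generateFrom_measurableCylinders.symm
    isPiSystem_measurableCylinders key ?_
  have huniv : (Set.univ : Set (∀ _ : Set.Icc (0:ℝ) T, ℕ))
      ∈ measurableCylinders (fun _ : Set.Icc (0:ℝ) T => ℕ) := by
    rw [← cylinder_univ (∅ : Finset (Set.Icc (0:ℝ) T))]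
    exact cylinder_mem_measurableCylinders _ _ MeasurableSet.univ
  exact key _ huniv

end Core



/-- The path laws on `[0,T]` of two compound Poisson processes built from the same
i.i.d. jumps but different rates are mutually absolutely continuous. -/
theorem compound_poisson_mutually_ac {Ω : Type*} [MeasurableSpace Ω]
    (μ : Measure Ω) [IsProbabilityMeasure μ] (lam r : ℝ≥0)
    (hlam : 0 < lam) (hr : 0 < r) (N M : ℝ → Ω → ℕ)
    (hN : IsPoissonProcess μ lam N) (hM : IsPoissonProcess μ (r * lam) M)
    (C : ℕ → Ω → ℝ) (hmeas : ∀ i, Measurable (C i))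
    (hiid : iIndepFun C μ)
    (hident : ∀ i, Measure.map (C i) μ = Measure.map (C 0) μ)
    (hindepNC : IndepFun (fun ω => fun t : ℝ => N t ω)
      (fun ω => fun i : ℕ => C i ω) μ)
    (hindepM : IndepFun (fun ω => fun t : ℝ => M t ω)
      (fun ω => (fun t : ℝ => N t ω, fun i : ℕ => C i ω)) μ)
    (T : ℝ) (hT : 0 < T) :
    Measure.map (fun ω => fun t : Set.Icc (0:ℝ) T =>
        ∑ i ∈ Finset.range (N (t:ℝ) ω), C i ω) μ ≪
      Measure.map (fun ω => fun t : Set.Icc (0:ℝ) T =>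
        ∑ i ∈ Finset.range (M (t:ℝ) ω), C i ω) μ ∧
    Measure.map (fun ω => fun t : Set.Icc (0:ℝ) T =>
        ∑ i ∈ Finset.range (M (t:ℝ) ω), C i ω) μ ≪
      Measure.map (fun ω => fun t : Set.Icc (0:ℝ) T =>
        ∑ i ∈ Finset.range (N (t:ℝ) ω), C i ω) μ := by 
  -- restricted path maps
  set resN : Ω → (Set.Icc (0:ℝ) T → ℕ) := fun ω => fun t => N (t:ℝ) ω with hresN
  set resM : Ω → (Set.Icc (0:ℝ) T → ℕ) := fun ω => fun t => M (t:ℝ) ω with hresM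
  set Cf : Ω → (ℕ → ℝ) := fun ω => fun i => C i ω with hCf
  have hmeasN : Measurable resN := measurable_pi_lambda _ fun t => hN.2.2.1 _
  have hmeasM : Measurable resM := measurable_pi_lambda _ fun t => hM.2.2.1 _
  have hCmeas : Measurable Cf := measurable_pi_lambda _ hmeas
  -- the compounding map
  set G : ((Set.Icc (0:ℝ) T → ℕ) × (ℕ → ℝ)) → (Set.Icc (0:ℝ) T → ℝ) :=
    fun p t => ∑ i ∈ Finset.range (p.1 t), p.2 i with hG
  have hGmeas : Measurable G := by
    refine measurable_pi_lambda _ fun t => ?_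
    have h1 : Measurable (fun q : (ℕ → ℝ) × ℕ => ∑ i ∈ Finset.range q.2, q.1 i) := by
      refine measurable_from_prod_countable_left fun n => ?_
      exact Finset.measurable_sum (Finset.range n) (fun (i:ℕ) _ => (measurable_pi_apply i : Measurable fun c : ℕ → ℝ => c i))
    exact h1.comp (measurable_snd.prodMk ((measurable_pi_apply t).comp measurable_fst))
  have hfactN : (fun ω => fun t : Set.Icc (0:ℝ) T => ∑ i ∈ Finset.range (N (t:ℝ) ω), C i ω)
      = G ∘ (fun ω => (resN ω, Cf ω)) := rfl
  have hfactM : (fun ω => fun t : Set.Icc (0:ℝ) T => ∑ i ∈ Finset.range (M (t:ℝ) ω), C i ω)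
      = G ∘ (fun ω => (resM ω, Cf ω)) := rfl
  -- independence of restricted paths and jumps
  have hresMeas : Measurable (fun f : ℝ → ℕ => fun t : Set.Icc (0:ℝ) T => f (t:ℝ)) :=
    measurable_pi_lambda _ fun t => measurable_pi_apply _
  have hindN : IndepFun resN Cf μ := hindepNC.comp hresMeas measurable_id
  have hindM : IndepFun resM Cf μ := hindepM.comp hresMeas measurable_snd
  have hprodN : μ.map (fun ω => (resN ω, Cf ω)) = (μ.map resN).prod (μ.map Cf) :=
    (indepFun_iff_map_prod_eq_prod_map_map hmeasN.aemeasurable hCmeas.aemeasurable).1 hindN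
  have hprodM : μ.map (fun ω => (resM ω, Cf ω)) = (μ.map resM).prod (μ.map Cf) :=
    (indepFun_iff_map_prod_eq_prod_map_map hmeasM.aemeasurable hCmeas.aemeasurable).1 hindM
  -- mutual absolute continuity of the restricted count path laws
  have h1 : μ.map resM ≪ μ.map resN := by
    rw [my_compound_core μ lam r N M hN hM T hT]
    exact withDensity_absolutelyContinuous _ _
  have h2 : μ.map resN ≪ μ.map resM := by
    have hN' : IsPoissonProcess μ (r⁻¹ * (r * lam)) N := by
      rwa [← mul_assoc, inv_mul_cancel₀ hr.ne', one_mul]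
    rw [my_compound_core μ (r * lam) r⁻¹ M N hM hN' T hT]
    exact withDensity_absolutelyContinuous _ _
  -- assemble
  haveI : SFinite (μ.map Cf) := by
    haveI : IsProbabilityMeasure (μ.map Cf) := Measure.isProbabilityMeasure_map hCmeas.aemeasurable
    infer_instance
  constructor
  · rw [hfactN, hfactM, ← Measure.map_map hGmeas (hmeasN.prodMk hCmeas),
      ← Measure.map_map hGmeas (hmeasM.prodMk hCmeas), hprodN, hprodM]
    exact (h2.prod Measure.AbsolutelyContinuous.rfl).map hGmeas
  · rw [hfactN, hfactM, ← Measure.map_map hGmeas (hmeasN.prodMk hCmeas),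
      ← Measure.map_map hGmeas (hmeasM.prodMk hCmeas), hprodN, hprodM]
    exact (h1.prod Measure.AbsolutelyContinuous.rfl).map hGmeas
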